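/- Let p be a positive rational with √p irrational, and let x₁ = a₁ + b₁√p, …, xₙ = aₙ + bₙ√p with all aᵢ, bᵢ ∈ ℚ and all xᵢ > 0. Suppose there exist indices i, j with (aᵢ − bᵢ√p)(aⱼ − bⱼ√p) < 0. Then a rectangle of aspect ratio z > 0 can be tiled by rectangles with aspect ratios x₁, …, xₙ if and only if z = e + f√p for some rationals e, f. -/

import Mathlib

/-- A tiling of the rectangle `[0,1] × [0,r]` by finitely many closed
axis-parallel rectangles with positive side lengths, covering the rectangle
and having pairwise disjoint interiors. -/
structure RectTiling (r : ℝ) where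
  m : ℕ
  px : Fin m → ℝ
  py : Fin m → ℝ
  w : Fin m → ℝ
  h : Fin m → ℝ
  w_pos : ∀ k, 0 < w k
  h_pos : ∀ k, 0 < h k
  cover : (Set.Icc (0:ℝ) 1 ×ˢ Set.Icc (0:ℝ) r) =
      ⋃ k, Set.Icc (px k) (px k + w k) ×ˢ Set.Icc (py k) (py k + h k)
  disj : ∀ k l, k ≠ l →
      Disjoint ((Set.Ioo (px k) (px k + w k)) ×ˢ (Set.Ioo (py k) (py k + h k)))
               ((Set.Ioo (px l) (px l + w l)) ×ˢ (Set.Ioo (py l) (py l + h l)))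

/-- Tile `k` of the tiling `T` has aspect ratio `x` (in one of the two orientations). -/
def RectTiling.ratioOK {r : ℝ} (T : RectTiling r) (k : Fin T.m) (x : ℝ) : Prop :=
  T.h k / T.w k = x ∨ T.w k / T.h k = x

/-- The rectangle of aspect ratio `r` is tileable by rectangles with aspect
ratios among `X`. -/
def Tileable (r : ℝ) {n : ℕ} (X : Fin n → ℝ) : Prop :=
  ∃ T : RectTiling r, ∀ k, ∃ i, T.ratioOK k (X i)

/-- The rectangle of aspect ratio `r` admits a *diverse* tiling by rectangles
with aspect ratios `X 0, …, X (n-1)`: every tile has some ratio `X i`, and for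
every `i` some tile has ratio `X i`. -/
def DiverselyTileable (r : ℝ) {n : ℕ} (X : Fin n → ℝ) : Prop :=
  ∃ T : RectTiling r, (∀ k, ∃ i, T.ratioOK k (X i)) ∧ (∀ i, ∃ k, T.ratioOK k (X i))

noncomputable section

lemma RectTiling.bounds {r : ℝ} (T : RectTiling r) (k : Fin T.m) :
    0 ≤ T.px k ∧ T.px k + T.w k ≤ 1 ∧ 0 ≤ T.py k ∧ T.py k + T.h k ≤ r := by
  have hsub : Set.Icc (T.px k) (T.px k + T.w k) ×ˢ Set.Icc (T.py k) (T.py k + T.h k) ⊆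
      Set.Icc (0:ℝ) 1 ×ˢ Set.Icc (0:ℝ) r := by
    rw [T.cover]
    exact Set.subset_iUnion
      (fun k => Set.Icc (T.px k) (T.px k + T.w k) ×ˢ Set.Icc (T.py k) (T.py k + T.h k)) k
  have h1 := hsub (Set.mk_mem_prod
    (Set.left_mem_Icc.2 (by linarith [T.w_pos k]))
    (Set.left_mem_Icc.2 (by linarith [T.h_pos k])))
  have h2 := hsub (Set.mk_mem_prod
    (Set.right_mem_Icc.2 (by linarith [T.w_pos k]))
    (Set.right_mem_Icc.2 (by linarith [T.h_pos k])))
  exact ⟨h1.1.1, h2.1.2, h1.2.1, h2.2.2⟩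

lemma tileable_single {n : ℕ} (X : Fin n → ℝ) (i : Fin n) (h : 0 < X i) :
    Tileable (X i) X := by
  refine ⟨⟨1, fun _ => 0, fun _ => 0, fun _ => 1, fun _ => X i,
    fun _ => one_pos, fun _ => h, by simp only [Set.iUnion_const, zero_add], fun k l hkl => absurd (Subsingleton.elim k l) hkl⟩,
    fun k => ⟨i, Or.inl (by simp)⟩⟩

lemma iUnion_fin_add {α : Type*} {m n : ℕ} (f : Fin (m+n) → Set α)
    (g : Fin m → Set α) (h : Fin n → Set α)
    (hg : ∀ i, f (Fin.castAdd n i) = g i) (hh : ∀ j, f (Fin.natAdd m j) = h j) :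
    (⋃ k, f k) = (⋃ i, g i) ∪ ⋃ j, h j := by
  ext x
  simp only [Set.mem_iUnion, Set.mem_union]
  constructor
  · rintro ⟨k, hk⟩
    refine Fin.addCases (motive := fun k => x ∈ f k → ((∃ i, x ∈ g i) ∨ ∃ j, x ∈ h j))
      (fun i hi => Or.inl ⟨i, by rwa [hg i] at hi⟩)
      (fun j hj => Or.inr ⟨j, by rwa [hh j] at hj⟩) k hk
  · rintro (⟨i, hi⟩ | ⟨j, hj⟩)
    · exact ⟨Fin.castAdd n i, by rwa [hg i]⟩
    · exact ⟨Fin.natAdd m j, by rwa [hh j]⟩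

lemma tileable_add {n : ℕ} {X : Fin n → ℝ} {r s : ℝ} (hr : 0 < r) (hs : 0 < s)
    (h1 : Tileable r X) (h2 : Tileable s X) : Tileable (r + s) X := by
  obtain ⟨T1, hT1⟩ := h1
  obtain ⟨T2, hT2⟩ := h2
  refine ⟨⟨T1.m + T2.m,
    Fin.append T1.px T2.px,
    Fin.append T1.py (fun k => T2.py k + r),
    Fin.append T1.w T2.w,
    Fin.append T1.h T2.h, ?_, ?_, ?_, ?_⟩, ?_⟩
  · intro k
    refine Fin.addCases (fun i => ?_) (fun j => ?_) k
    · rw [Fin.append_left]; exact T1.w_pos i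
    · rw [Fin.append_right]; exact T2.w_pos j
  · intro k
    refine Fin.addCases (fun i => ?_) (fun j => ?_) k
    · rw [Fin.append_left]; exact T1.h_pos i
    · rw [Fin.append_right]; exact T2.h_pos j
  · -- cover
    rw [iUnion_fin_add _
      (fun i => Set.Icc (T1.px i) (T1.px i + T1.w i) ×ˢ Set.Icc (T1.py i) (T1.py i + T1.h i))
      (fun j => Set.Icc (T2.px j) (T2.px j + T2.w j) ×ˢ
        Set.Icc (T2.py j + r) ((T2.py j + r) + T2.h j))
      (fun i => by simp [Fin.append_left])
      (fun j => by simp [Fin.append_right])]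
    rw [← T1.cover]
    have hshift : (⋃ j, Set.Icc (T2.px j) (T2.px j + T2.w j) ×ˢ
        Set.Icc (T2.py j + r) ((T2.py j + r) + T2.h j)) =
        Set.Icc (0:ℝ) 1 ×ˢ Set.Icc r (r + s) := by
      ext ⟨u, v⟩
      have hmem : ∀ j, ((u, v) ∈ Set.Icc (T2.px j) (T2.px j + T2.w j) ×ˢ
          Set.Icc (T2.py j + r) ((T2.py j + r) + T2.h j)) ↔
          ((u, v - r) ∈ Set.Icc (T2.px j) (T2.px j + T2.w j) ×ˢ
          Set.Icc (T2.py j) (T2.py j + T2.h j)) := by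
        intro j
        simp only [Set.mem_prod, Set.mem_Icc]
        constructor <;> rintro ⟨⟨a1, a2⟩, ⟨a3, a4⟩⟩ <;> exact ⟨⟨a1, a2⟩, by constructor <;> linarith⟩
      have hmem2 : ((u, v) ∈ Set.Icc (0:ℝ) 1 ×ˢ Set.Icc r (r+s)) ↔
          ((u, v - r) ∈ Set.Icc (0:ℝ) 1 ×ˢ Set.Icc (0:ℝ) s) := by
        simp only [Set.mem_prod, Set.mem_Icc]
        constructor <;> rintro ⟨⟨a1, a2⟩, ⟨a3, a4⟩⟩ <;> exact ⟨⟨a1, a2⟩, by constructor <;> linarith⟩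
      simp only [Set.mem_iUnion, hmem, hmem2, T2.cover]
    rw [hshift, ← Set.prod_union, Set.Icc_union_Icc_eq_Icc (by linarith) (by linarith)]
  · -- disj
    intro k l
    induction k using Fin.addCases with
    | left i =>
      induction l using Fin.addCases with
      | left i' =>
        intro hne
        simp only [Fin.append_left]
        exact T1.disj i i' (fun hc => hne (by rw [hc]))
      | right j' =>
        intro _
        simp only [Fin.append_left, Fin.append_right]
        rw [Set.disjoint_left]
        rintro ⟨u, v⟩ hm1 hm2
        simp only [Set.mem_prod, Set.mem_Ioo] at hm1 hm2
        have b1 := (T1.bounds i).2.2.2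
        have b2 := (T2.bounds j').2.2.1
        linarith [hm1.2.2, hm2.2.1]
    | right j =>
      induction l using Fin.addCases with
      | left i' =>
        intro _
        simp only [Fin.append_left, Fin.append_right]
        rw [Set.disjoint_left]
        rintro ⟨u, v⟩ hm1 hm2
        simp only [Set.mem_prod, Set.mem_Ioo] at hm1 hm2
        have b1 := (T1.bounds i').2.2.2
        have b2 := (T2.bounds j).2.2.1
        linarith [hm1.2.1, hm2.2.2]
      | right j' =>
        intro hne
        have hne2 : j ≠ j' := fun hc => hne (by rw [hc])
        simp only [Fin.append_right]
        rw [Set.disjoint_left]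
        rintro ⟨u, v⟩ hm1 hm2
        simp only [Set.mem_prod, Set.mem_Ioo] at hm1 hm2
        have hd := Set.disjoint_left.mp (T2.disj j j' hne2)
        have hmA : (u, v - r) ∈ Set.Ioo (T2.px j) (T2.px j + T2.w j) ×ˢ
            Set.Ioo (T2.py j) (T2.py j + T2.h j) := by
          simp only [Set.mem_prod, Set.mem_Ioo]
          exact ⟨hm1.1, by constructor <;> linarith [hm1.2.1, hm1.2.2]⟩
        have hmB : (u, v - r) ∈ Set.Ioo (T2.px j') (T2.px j' + T2.w j') ×ˢ
            Set.Ioo (T2.py j') (T2.py j' + T2.h j') := by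
          simp only [Set.mem_prod, Set.mem_Ioo]
          exact ⟨hm2.1, by constructor <;> linarith [hm2.2.1, hm2.2.2]⟩
        exact hd hmA hmB
  · -- ratios
    intro k
    refine Fin.addCases (fun i => ?_) (fun j => ?_) k
    · obtain ⟨i0, hi0⟩ := hT1 i
      exact ⟨i0, by simpa [RectTiling.ratioOK, Fin.append_left] using hi0⟩
    · obtain ⟨j0, hj0⟩ := hT2 j
      exact ⟨j0, by simpa [RectTiling.ratioOK, Fin.append_right] using hj0⟩

lemma tileable_inv {n : ℕ} {X : Fin n → ℝ} {r : ℝ} (hr : 0 < r)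
    (h : Tileable r X) : Tileable r⁻¹ X := by
  obtain ⟨T, hT⟩ := h
  have hrne : r ≠ 0 := ne_of_gt hr
  refine ⟨⟨T.m,
    fun k => T.py k / r, fun k => T.px k / r,
    fun k => T.h k / r, fun k => T.w k / r,
    fun k => div_pos (T.h_pos k) hr,
    fun k => div_pos (T.w_pos k) hr, ?_, ?_⟩, ?_⟩
  · -- cover
    ext ⟨u, v⟩
    simp only [Set.mem_prod, Set.mem_Icc, Set.mem_iUnion]
    constructor
    · rintro ⟨⟨hu0, hu1⟩, hv0, hv1⟩
      have hmem : (r * v, r * u) ∈ Set.Icc (0:ℝ) 1 ×ˢ Set.Icc (0:ℝ) r := by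
        simp only [Set.mem_prod, Set.mem_Icc]
        refine ⟨⟨by positivity, ?_⟩, by positivity, by nlinarith⟩
        calc r * v ≤ r * r⁻¹ := by nlinarith
        _ = 1 := mul_inv_cancel₀ hrne
      rw [T.cover] at hmem
      simp only [Set.mem_iUnion, Set.mem_prod, Set.mem_Icc] at hmem
      obtain ⟨k, ⟨hx1, hx2⟩, hy1, hy2⟩ := hmem
      refine ⟨k, ⟨?_, ?_⟩, ?_, ?_⟩
      · rw [div_le_iff₀ hr]; linarith
      · rw [← add_div, le_div_iff₀ hr]; linarith
      · rw [div_le_iff₀ hr]; linarith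
      · rw [← add_div, le_div_iff₀ hr]; linarith
    · rintro ⟨k, ⟨hx1, hx2⟩, hy1, hy2⟩
      rw [← add_div] at hx2 hy2
      rw [div_le_iff₀ hr] at hx1 hy1
      rw [le_div_iff₀ hr] at hx2 hy2
      have hb := T.bounds k
      constructor
      · constructor <;> nlinarith
      · constructor
        · nlinarith
        · rw [← one_div r, le_div_iff₀ hr]; nlinarith
  · -- disj
    intro k l hkl
    rw [Set.disjoint_left]
    rintro ⟨u, v⟩ hm1 hm2
    simp only [Set.mem_prod, Set.mem_Ioo] at hm1 hm2
    have hd := Set.disjoint_left.mp (T.disj k l hkl)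
    have hmA : (r * v, r * u) ∈ Set.Ioo (T.px k) (T.px k + T.w k) ×ˢ
        Set.Ioo (T.py k) (T.py k + T.h k) := by
      simp only [Set.mem_prod, Set.mem_Ioo]
      obtain ⟨⟨a1, a2⟩, a3, a4⟩ := hm1
      rw [← add_div] at a2 a4
      rw [div_lt_iff₀ hr] at a1 a3
      rw [lt_div_iff₀ hr] at a2 a4
      constructor <;> constructor <;> nlinarith
    have hmB : (r * v, r * u) ∈ Set.Ioo (T.px l) (T.px l + T.w l) ×ˢ
        Set.Ioo (T.py l) (T.py l + T.h l) := by
      simp only [Set.mem_prod, Set.mem_Ioo]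
      obtain ⟨⟨a1, a2⟩, a3, a4⟩ := hm2
      rw [← add_div] at a2 a4
      rw [div_lt_iff₀ hr] at a1 a3
      rw [lt_div_iff₀ hr] at a2 a4
      constructor <;> constructor <;> nlinarith
    exact hd hmA hmB
  · -- ratios
    intro k
    obtain ⟨i, hi⟩ := hT k
    have hwne : T.w k ≠ 0 := ne_of_gt (T.w_pos k)
    have hhne : T.h k ≠ 0 := ne_of_gt (T.h_pos k)
    refine ⟨i, ?_⟩
    show T.w k / r / (T.h k / r) = X i ∨ T.h k / r / (T.w k / r) = X i
    have e1 : T.w k / r / (T.h k / r) = T.w k / T.h k := by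
      field_simp
    have e2 : T.h k / r / (T.w k / r) = T.h k / T.w k := by
      field_simp
    rcases hi with hi | hi
    · exact Or.inr (by rw [e2]; exact hi)
    · exact Or.inl (by rw [e1]; exact hi)

lemma tileable_congr {n : ℕ} {X : Fin n → ℝ} {r s : ℝ} (h : r = s) :
    Tileable r X → Tileable s X := by rintro ht; rwa [h] at ht

lemma tileable_nsmul {n : ℕ} {X : Fin n → ℝ} {r : ℝ} (hr : 0 < r)
    (h : Tileable r X) : ∀ k : ℕ, Tileable ((k+1 : ℕ) * r) X := by
  intro k
  induction k with
  | zero => exact tileable_congr (by norm_num) h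
  | succ k ih =>
    have : ((k+1:ℕ) : ℝ) * r + r = ((k+2:ℕ) : ℝ) * r := by push_cast; ring
    exact tileable_congr this (tileable_add (by positivity) hr ih h)

lemma tileable_natmul {n : ℕ} {X : Fin n → ℝ} {r : ℝ} (hr : 0 < r)
    (h : Tileable r X) (k : ℕ) (hk : 0 < k) : Tileable ((k:ℕ) * r) X := by
  obtain ⟨k', rfl⟩ : ∃ k', k = k' + 1 := ⟨k - 1, by omega⟩
  exact tileable_nsmul hr h k'

lemma tileable_natdiv {n : ℕ} {X : Fin n → ℝ} {r : ℝ} (hr : 0 < r)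
    (h : Tileable r X) (k : ℕ) (hk : 0 < k) : Tileable (r / (k:ℕ)) X := by
  have hk' : (0:ℝ) < (k:ℕ) := by exact_mod_cast hk
  have h1 : Tileable r⁻¹ X := tileable_inv hr h
  have h2 : Tileable ((k:ℕ) * r⁻¹) X := tileable_natmul (by positivity) h1 k hk
  have h3 : Tileable ((k:ℕ) * r⁻¹)⁻¹ X := tileable_inv (by positivity) h2
  refine tileable_congr ?_ h3
  field_simp

lemma tileable_ratmul {n : ℕ} {X : Fin n → ℝ} {r : ℝ} (q : ℚ) (hq : 0 < q) (hr : 0 < r)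
    (h : Tileable r X) : Tileable ((q:ℝ) * r) X := by
  have hnum : 0 < q.num.toNat := by
    have := Rat.num_pos.mpr hq
    omega
  have hden : 0 < q.den := q.pos
  have h1 : Tileable (r / (q.den:ℕ)) X := tileable_natdiv hr h q.den hden
  have h2 : Tileable ((q.num.toNat : ℕ) * (r / (q.den:ℕ))) X :=
    tileable_natmul (by positivity) h1 _ hnum
  refine tileable_congr ?_ h2
  have hq' : (q:ℝ) = (q.num.toNat : ℝ) / (q.den : ℝ) := by
    have hnn : (q.num.toNat : ℝ) = ((q.num : ℤ) : ℝ) := by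
      exact_mod_cast Int.toNat_of_nonneg (Rat.num_pos.mpr hq).le
    rw [Rat.cast_def, hnn]
  rw [hq']
  ring



open MeasureTheory

variable {p : ℚ}

lemma sq_ne (hirr : Irrational (Real.sqrt p)) (e f : ℚ) (hf : f ≠ 0) :
    e^2 - p * f^2 ≠ 0 := by
  intro h
  have hf' : (f:ℝ) ≠ 0 := by exact_mod_cast hf
  have hq : ((e:ℝ)/(f:ℝ))^2 = (p : ℝ) := by
    have : (e:ℝ)^2 = p * f^2 := by exact_mod_cast (by linarith : e^2 = p*f^2)
    field_simp
    linarith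
  exact hirr ⟨|e/f|, by
    push_cast
    rw [← Real.sqrt_sq_eq_abs, hq]⟩

lemma inv_formula (hp : 0 < p) (hirr : Irrational (Real.sqrt p)) (e f : ℚ)
    (hx : ((e:ℝ) + f * Real.sqrt p) ≠ 0) :
    ((e:ℝ) + f * Real.sqrt p)⁻¹
      = ((e/(e^2 - p*f^2) : ℚ) : ℝ) + ((-f/(e^2 - p*f^2) : ℚ) : ℝ) * Real.sqrt p := by
  have hs : Real.sqrt p ^ 2 = (p:ℝ) := Real.sq_sqrt (by exact_mod_cast hp.le)
  have hN : (e^2 - p*f^2 : ℚ) ≠ 0 := by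
    rcases eq_or_ne f 0 with rfl | hf
    · intro h
      apply hx
      have he : e = 0 := by
        have : e^2 = 0 := by linarith
        exact pow_eq_zero_iff (by norm_num) |>.mp this
      simp [he]
    · exact sq_ne hirr e f hf
  have hN' : ((e:ℝ)^2 - p*f^2) ≠ 0 := by exact_mod_cast hN
  refine inv_eq_of_mul_eq_one_right ?_
  push_cast
  have key : ((e:ℝ)+f*Real.sqrt p) * ((e:ℝ) - f*Real.sqrt p) = (e:ℝ)^2 - p*f^2 := by
    linear_combination (-(f:ℝ)^2) * hs
  rw [show ((e:ℝ) + f * Real.sqrt p) * ((e:ℝ)/((e:ℝ)^2 - p*f^2) + (-(f:ℝ))/((e:ℝ)^2 - p*f^2) * Real.sqrt p) = (((e:ℝ)+f*Real.sqrt p) * ((e:ℝ) - f*Real.sqrt p))/((e:ℝ)^2 - p*f^2) from by ring, key, div_self hN']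

def Qp (p : ℚ) (hp : 0 < p) (hirr : Irrational (Real.sqrt p)) : Subfield ℝ where
  carrier := {x | ∃ e f : ℚ, x = (e:ℝ) + f * Real.sqrt p}
  zero_mem' := ⟨0, 0, by simp⟩
  one_mem' := ⟨1, 0, by simp⟩
  add_mem' := by
    rintro x y ⟨e, f, rfl⟩ ⟨e', f', rfl⟩
    exact ⟨e + e', f + f', by push_cast; ring⟩
  neg_mem' := by
    rintro x ⟨e, f, rfl⟩
    exact ⟨-e, -f, by push_cast; ring⟩
  mul_mem' := by
    rintro x y ⟨e, f, rfl⟩ ⟨e', f', rfl⟩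
    refine ⟨e*e' + p*(f*f'), e*f' + f*e', ?_⟩
    have hs : Real.sqrt p ^ 2 = (p:ℝ) := Real.sq_sqrt (by exact_mod_cast hp.le)
    push_cast
    linear_combination (f : ℝ) * (f':ℝ) * hs
  inv_mem' := by
    rintro x ⟨e, f, rfl⟩
    by_cases hx : ((e:ℝ) + f * Real.sqrt p) = 0
    · rw [hx, inv_zero]; exact ⟨0, 0, by simp⟩
    · exact ⟨e/(e^2 - p*f^2), -f/(e^2 - p*f^2), inv_formula hp hirr e f hx⟩

lemma mem_Qp (hp : 0 < p) (hirr : Irrational (Real.sqrt p)) (x : ℝ) :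
    x ∈ Qp p hp hirr ↔ ∃ e f : ℚ, x = (e:ℝ) + f * Real.sqrt p := Iff.rfl

set_option synthInstance.maxHeartbeats 1000000 in
lemma exists_phi (K : Subfield ℝ) (z : ℝ) (hz : z ∉ K) :
    ∃ φ : ℝ →ₗ[K] K, φ 1 = 1 ∧ φ z = -1 := by
  have hz1 : z ≠ 1 := fun h => hz (h ▸ K.one_mem)
  have hznotin : z ∉ ({1} : Set ℝ) := by simpa using hz1
  have li1 : LinearIndepOn K id ({1} : Set ℝ) :=
    LinearIndepOn.singleton one_ne_zero
  have hzspan : z ∉ Submodule.span K ({1} : Set ℝ) := by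
    rw [Submodule.mem_span_singleton]
    rintro ⟨c, hc⟩
    apply hz
    rw [← hc]
    show (c:ℝ) * 1 ∈ K
    exact K.mul_mem c.2 K.one_mem
  have li : LinearIndepOn K id (insert z {1} : Set ℝ) :=
    (linearIndepOn_id_insert hznotin).2 ⟨li1, hzspan⟩
  let B := Module.Basis.extend li
  have hsub : insert z ({1} : Set ℝ) ⊆ li.extend (Set.subset_univ _) :=
    li.subset_extend _
  have hzmem : z ∈ li.extend (Set.subset_univ _) := hsub (Set.mem_insert _ _)
  have h1mem : (1:ℝ) ∈ li.extend (Set.subset_univ _) := hsub (by simp)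
  set i1 : li.extend (Set.subset_univ _) := ⟨1, h1mem⟩
  set iz : li.extend (Set.subset_univ _) := ⟨z, hzmem⟩
  have hne : i1 ≠ iz := by
    intro h
    have : (1:ℝ) = z := congrArg Subtype.val h
    exact hz1 this.symm
  have h1 : B i1 = 1 := Module.Basis.extend_apply_self li i1
  have h2 : B iz = z := Module.Basis.extend_apply_self li iz
  have e1 : B.coord i1 (B i1) = 1 := by
    rw [Module.Basis.coord_apply, Module.Basis.repr_self, Finsupp.single_eq_same]
  have e2 : B.coord iz (B i1) = 0 := by
    rw [Module.Basis.coord_apply, Module.Basis.repr_self, Finsupp.single_eq_of_ne hne.symm]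
  have e3 : B.coord i1 (B iz) = 0 := by
    rw [Module.Basis.coord_apply, Module.Basis.repr_self, Finsupp.single_eq_of_ne hne]
  have e4 : B.coord iz (B iz) = 1 := by
    rw [Module.Basis.coord_apply, Module.Basis.repr_self, Finsupp.single_eq_same]
  rw [h1] at e1 e2
  rw [h2] at e3 e4
  refine ⟨B.coord i1 - B.coord iz, ?_, ?_⟩
  · rw [LinearMap.sub_apply, e1, e2]; ring
  · rw [LinearMap.sub_apply, e3, e4]; ring


section Backward

lemma bpos {p : ℚ} (hp : 0 < p)
    {n : ℕ} {X : Fin n → ℝ} (a b : Fin n → ℚ)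
    (hX : ∀ i, X i = (a i : ℝ) + (b i : ℝ) * Real.sqrt p)
    (hXpos : ∀ i, 0 < X i)
    (i : Fin n) (hi : (a i:ℝ) - b i * Real.sqrt p < 0) : 0 < b i := by
  have hs0 : 0 < Real.sqrt p := Real.sqrt_pos.2 (by exact_mod_cast hp)
  have hxpos := hXpos i
  rw [hX i] at hxpos
  have : (0:ℝ) < b i := by nlinarith
  exact_mod_cast this

lemma tileable_case2 {p : ℚ} (hp : 0 < p) (hirr : Irrational (Real.sqrt p))
    {n : ℕ} {X : Fin n → ℝ} (a b : Fin n → ℚ)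
    (hX : ∀ i, X i = (a i : ℝ) + (b i : ℝ) * Real.sqrt p)
    (hXpos : ∀ i, 0 < X i)
    (i : Fin n) (hi : (a i:ℝ) - b i * Real.sqrt p < 0)
    (hrat : ∀ q : ℚ, 0 < q → Tileable ((q:ℝ)) X)
    (e f : ℚ) (he : 0 ≤ e) (hf : 0 < f) :
    Tileable ((e:ℝ) + (f:ℝ) * Real.sqrt p) X := by
  have hs2 : Real.sqrt p ^ 2 = (p:ℝ) := Real.sq_sqrt (by exact_mod_cast hp.le)
  have hs0 : 0 < Real.sqrt p := Real.sqrt_pos.2 (by exact_mod_cast hp)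
  have hxpos := hXpos i
  rw [hX i] at hxpos
  have hbi : 0 < b i := bpos hp a b hX hXpos i hi
  have hbiR : (0:ℝ) < (b i : ℝ) := by exact_mod_cast hbi
  set N : ℚ := (a i)^2 - p * (b i)^2 with hNdef
  have hNfact : ((a i:ℝ))^2 - p * (b i)^2
      = ((a i:ℝ) + b i * Real.sqrt p) * ((a i:ℝ) - b i * Real.sqrt p) := by
    linear_combination (b i:ℝ)^2 * hs2
  have hNnegR : ((a i:ℝ))^2 - p * (b i)^2 < 0 := by
    rw [hNfact]; exact mul_neg_of_pos_of_neg hxpos hi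
  have hNneg : N < 0 := by
    rw [hNdef]
    exact_mod_cast (by push_cast; exact hNnegR : ((((a i)^2 - p * (b i)^2 : ℚ)):ℝ) < 0)
  set B' : ℚ := -(b i) / N with hB'def
  have hB' : 0 < B' := by
    rw [hB'def]
    exact div_pos_of_neg_of_neg (by linarith) hNneg
  have hinv : (X i)⁻¹ = ((a i / N : ℚ):ℝ) + ((-(b i) / N : ℚ):ℝ) * Real.sqrt p := by
    rw [hX i]
    exact inv_formula hp hirr _ _ (ne_of_gt hxpos)
  have c1 : Tileable (((f/(2*b i) : ℚ):ℝ) * (X i)) X :=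
    tileable_ratmul _ (by positivity) (hXpos i) (tileable_single X i (hXpos i))
  have c2 : Tileable (((f/(2*B') : ℚ):ℝ) * (X i)⁻¹) X :=
    tileable_ratmul _ (by positivity) (inv_pos.2 (hXpos i))
      (tileable_inv (hXpos i) (tileable_single X i (hXpos i)))
  have hxi := hXpos i
  have hp1 : (0:ℝ) < ((f/(2*b i) : ℚ):ℝ) * (X i) := by
    have h0 : (0:ℝ) < ((f/(2*b i) : ℚ):ℝ) := by exact_mod_cast div_pos hf (by linarith)
    positivity
  have hp2 : (0:ℝ) < ((f/(2*B') : ℚ):ℝ) * (X i)⁻¹ := by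
    have h0 : (0:ℝ) < ((f/(2*B') : ℚ):ℝ) := by exact_mod_cast div_pos hf (by linarith)
    positivity
  have hsum : Tileable (((f/(2*b i) : ℚ):ℝ) * (X i) + ((f/(2*B') : ℚ):ℝ) * (X i)⁻¹) X :=
    tileable_add hp1 hp2 c1 c2
  have halg : ((f/(2*b i) : ℚ):ℝ) * (X i) + ((f/(2*B') : ℚ):ℝ) * (X i)⁻¹
      = (f:ℝ) * Real.sqrt p := by
    rw [hinv, hX i, hB'def]
    have hNne : (N:ℝ) ≠ 0 := by exact_mod_cast ne_of_lt hNneg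
    have hbine : ((b i):ℝ) ≠ 0 := ne_of_gt hbiR
    push_cast
    field_simp
    ring
  rcases eq_or_lt_of_le he with rfl | he'
  · refine tileable_congr ?_ hsum
    rw [halg]
    push_cast
    ring
  · have heR : (0:ℝ) < (e:ℝ) := by exact_mod_cast he'
    have hfin := tileable_add heR (by linarith) (hrat e he') hsum
    refine tileable_congr ?_ hfin
    rw [halg]

lemma exists_rat {p : ℚ} (hp : 0 < p) (hirr : Irrational (Real.sqrt p))
    {n : ℕ} {X : Fin n → ℝ} (a b : Fin n → ℚ)
    (hX : ∀ i, X i = (a i : ℝ) + (b i : ℝ) * Real.sqrt p)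
    (hXpos : ∀ i, 0 < X i)
    (i : Fin n) (hi : (a i:ℝ) - b i * Real.sqrt p < 0)
    (j : Fin n) (hj : 0 < (a j:ℝ) - b j * Real.sqrt p) :
    ∀ q : ℚ, 0 < q → Tileable ((q:ℝ)) X := by
  have hs2 : Real.sqrt p ^ 2 = (p:ℝ) := Real.sq_sqrt (by exact_mod_cast hp.le)
  have hs0 : 0 < Real.sqrt p := Real.sqrt_pos.2 (by exact_mod_cast hp)
  have hbi : 0 < b i := bpos hp a b hX hXpos i hi
  have hbiR : (0:ℝ) < (b i : ℝ) := by exact_mod_cast hbi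
  have hxpos := hXpos i; rw [hX i] at hxpos
  have hypos := hXpos j; rw [hX j] at hypos
  suffices h : ∃ r : ℚ, 0 < r ∧ Tileable ((r:ℝ)) X by
    rintro q hq
    obtain ⟨r, hr0, hrt⟩ := h
    have hrR : (0:ℝ) < (r:ℝ) := by exact_mod_cast hr0
    have := tileable_ratmul (q/r) (div_pos hq hr0) hrR hrt
    refine tileable_congr ?_ this
    push_cast
    field_simp
  rcases lt_trichotomy (b j) 0 with hbj | hbj | hbj
  · -- b j < 0 : use α * X i + X j
    set α : ℚ := -(b j)/(b i) with hα
    have hα0 : 0 < α := div_pos (by linarith) hbi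
    have hα0R : (0:ℝ) < (α:ℝ) := by exact_mod_cast hα0
    refine ⟨α * a i + a j, ?_, ?_⟩
    · have hval : ((α * a i + a j : ℚ):ℝ) = (α:ℝ) * X i + X j := by
        rw [hX i, hX j, hα]
        have : ((b i):ℝ) ≠ 0 := ne_of_gt hbiR
        push_cast
        field_simp
        ring
      have : (0:ℝ) < ((α * a i + a j : ℚ):ℝ) := by
        rw [hval]; have := hXpos i; have := hXpos j; positivity
      exact_mod_cast this
    · have t1 : Tileable ((α:ℝ) * X i) X :=
        tileable_ratmul α hα0 (hXpos i) (tileable_single X i (hXpos i))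
      have t2 := tileable_add (mul_pos hα0R (hXpos i)) (hXpos j) t1 (tileable_single X j (hXpos j))
      refine tileable_congr ?_ t2
      rw [hX i, hX j, hα]
      have : ((b i):ℝ) ≠ 0 := ne_of_gt hbiR
      push_cast
      field_simp
      ring
  · -- b j = 0 : X j is rational
    refine ⟨a j, ?_, ?_⟩
    · have : ((a j):ℝ) > 0 := by rw [hbj] at hypos; simpa using hypos
      exact_mod_cast this
    · refine tileable_congr ?_ (tileable_single X j (hXpos j))
      rw [hX j, hbj]; push_cast; ring
  · -- b j > 0 : use α * X i + (X j)⁻¹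
    set M : ℚ := (a j)^2 - p * (b j)^2 with hM
    have hMfact : ((a j:ℝ))^2 - p * (b j)^2
        = ((a j:ℝ) + b j * Real.sqrt p) * ((a j:ℝ) - b j * Real.sqrt p) := by
      linear_combination (b j:ℝ)^2 * hs2
    have hMposR : (0:ℝ) < ((a j:ℝ))^2 - p * (b j)^2 := by
      rw [hMfact]; exact mul_pos hypos hj
    have hMpos : 0 < M := by
      rw [hM]
      exact_mod_cast (by push_cast; exact hMposR : (0:ℝ) < (((a j)^2 - p * (b j)^2 : ℚ):ℝ))
    have hMne : (M:ℝ) ≠ 0 := by positivity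
    have hinv : (X j)⁻¹ = ((a j / M : ℚ):ℝ) + ((-(b j) / M : ℚ):ℝ) * Real.sqrt p := by
      rw [hX j]
      exact inv_formula hp hirr _ _ (ne_of_gt hypos)
    set α : ℚ := (b j / M)/(b i) with hα
    have hα0 : 0 < α := div_pos (div_pos hbj hMpos) hbi
    refine ⟨α * a i + a j / M, ?_, ?_⟩
    · have hval : ((α * a i + a j / M : ℚ):ℝ) = (α:ℝ) * X i + (X j)⁻¹ := by
        rw [hinv, hX i, hα]
        have h1 : ((b i):ℝ) ≠ 0 := ne_of_gt hbiR
        push_cast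
        field_simp
        ring
      have hα0R : (0:ℝ) < (α:ℝ) := by exact_mod_cast hα0
      have : (0:ℝ) < ((α * a i + a j / M : ℚ):ℝ) := by
        rw [hval]
        have h2 := hXpos i
        have h3 := hXpos j
        positivity
      exact_mod_cast this
    · have hα0R : (0:ℝ) < (α:ℝ) := by exact_mod_cast hα0
      have t1 : Tileable ((α:ℝ) * X i) X :=
        tileable_ratmul α hα0 (hXpos i) (tileable_single X i (hXpos i))
      have t2 : Tileable ((X j)⁻¹) X := tileable_inv (hXpos j) (tileable_single X j (hXpos j))
      have t3 := tileable_add (mul_pos hα0R (hXpos i)) (inv_pos.2 (hXpos j)) t1 t2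
      refine tileable_congr ?_ t3
      rw [hinv, hX i, hα]
      have h1 : ((b i):ℝ) ≠ 0 := ne_of_gt hbiR
      push_cast
      field_simp
      ring

lemma tileable_invcase {p : ℚ} (hp : 0 < p) (hirr : Irrational (Real.sqrt p))
    {n : ℕ} {X : Fin n → ℝ} (a b : Fin n → ℚ)
    (hX : ∀ i, X i = (a i : ℝ) + (b i : ℝ) * Real.sqrt p)
    (hXpos : ∀ i, 0 < X i)
    (i : Fin n) (hi : (a i:ℝ) - b i * Real.sqrt p < 0)
    (hrat : ∀ q : ℚ, 0 < q → Tileable ((q:ℝ)) X)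
    (e f : ℚ) (hz : 0 < (e:ℝ) + (f:ℝ) * Real.sqrt p)
    (he' : 0 ≤ e / (e^2 - p*f^2)) (hf' : 0 < -f / (e^2 - p*f^2)) :
    Tileable ((e:ℝ) + (f:ℝ) * Real.sqrt p) X := by
  have h1 := tileable_case2 hp hirr a b hX hXpos i hi hrat
    (e / (e^2 - p*f^2)) (-f / (e^2 - p*f^2)) he' hf'
  have h2 := inv_formula hp hirr e f (ne_of_gt hz)
  have h3 : Tileable (((e:ℝ) + (f:ℝ) * Real.sqrt p)⁻¹) X := tileable_congr h2.symm h1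
  have h4 := tileable_inv (inv_pos.2 hz) h3
  exact tileable_congr (inv_inv _) h4

lemma backward {p : ℚ} (hp : 0 < p) (hirr : Irrational (Real.sqrt p))
    {n : ℕ} {X : Fin n → ℝ} (a b : Fin n → ℚ)
    (hX : ∀ i, X i = (a i : ℝ) + (b i : ℝ) * Real.sqrt p)
    (hXpos : ∀ i, 0 < X i)
    (i : Fin n) (hi : (a i:ℝ) - b i * Real.sqrt p < 0)
    (j : Fin n) (hj : 0 < (a j:ℝ) - b j * Real.sqrt p)
    (e f : ℚ) (hz : 0 < (e:ℝ) + (f:ℝ) * Real.sqrt p) :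
    Tileable ((e:ℝ) + (f:ℝ) * Real.sqrt p) X := by
  have hs2 : Real.sqrt p ^ 2 = (p:ℝ) := Real.sq_sqrt (by exact_mod_cast hp.le)
  have hs0 : 0 < Real.sqrt p := Real.sqrt_pos.2 (by exact_mod_cast hp)
  have hrat := exists_rat hp hirr a b hX hXpos i hi j hj
  have hNfact : ((e:ℝ))^2 - p * f^2
      = ((e:ℝ) + f * Real.sqrt p) * ((e:ℝ) - f * Real.sqrt p) := by
    linear_combination (f:ℝ)^2 * hs2
  rcases lt_trichotomy f 0 with hf | hf | hf
  · -- f < 0 : conjugate positive, invert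
    have hfR : (f:ℝ) < 0 := by exact_mod_cast hf
    have hconj : (0:ℝ) < (e:ℝ) - f * Real.sqrt p := by nlinarith
    have hNR : (0:ℝ) < ((e:ℝ))^2 - p * f^2 := by rw [hNfact]; exact mul_pos hz hconj
    have hN : 0 < e^2 - p*f^2 := by
      exact_mod_cast (by push_cast; exact hNR : (0:ℝ) < ((e^2 - p*f^2 : ℚ):ℝ))
    have heR : (0:ℝ) < (e:ℝ) := by nlinarith
    have he : 0 < e := by exact_mod_cast heR
    exact tileable_invcase hp hirr a b hX hXpos i hi hrat e f hz
      (le_of_lt (div_pos he hN)) (div_pos (by linarith) hN)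
  · -- f = 0 : rational
    subst hf
    have heR : (0:ℝ) < (e:ℝ) := by simpa using hz
    have he : 0 < e := by exact_mod_cast heR
    refine tileable_congr ?_ (hrat e he)
    push_cast; ring
  · -- f > 0
    have hfR : (0:ℝ) < (f:ℝ) := by exact_mod_cast hf
    rcases le_or_gt 0 e with he | he
    · exact tileable_case2 hp hirr a b hX hXpos i hi hrat e f he hf
    · -- e < 0 : conjugate negative, invert
      have heR : (e:ℝ) < 0 := by exact_mod_cast he
      have hconj : (e:ℝ) - f * Real.sqrt p < 0 := by nlinarith
      have hNR : ((e:ℝ))^2 - p * f^2 < 0 := by rw [hNfact]; exact mul_neg_of_pos_of_neg hz hconj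
      have hN : e^2 - p*f^2 < 0 := by
        exact_mod_cast (by push_cast; exact hNR : ((e^2 - p*f^2 : ℚ):ℝ) < 0)
      exact tileable_invcase hp hirr a b hX hXpos i hi hrat e f hz
        (le_of_lt (div_pos_of_neg_of_neg he hN)) (div_pos_of_neg_of_neg (by linarith) hN)

lemma grid_exists (G : Finset ℝ) (c : ℝ) (h0 : (0:ℝ) ∈ G) (hc : c ∈ G)
    (hbd : ∀ v ∈ G, 0 ≤ v ∧ v ≤ c) :
    ∃ (M : ℕ) (e : ℕ → ℝ), 1 ≤ M ∧ e 0 = 0 ∧ e (M-1) = c ∧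
      (∀ i, i < M-1 → e i < e (i+1)) ∧ (∀ i, e i ∈ G) ∧
      (∀ v ∈ G, ∀ i, i < M-1 → v ≤ e i ∨ e (i+1) ≤ v) := by
  classical
  have hM : 0 < G.card := Finset.card_pos.2 ⟨0, h0⟩
  set M := G.card with hMdef
  let σ := G.orderIsoOfFin rfl
  let e : ℕ → ℝ := fun i => (σ ⟨min i (M-1), by omega⟩ : ℝ)
  have hmem : ∀ i, e i ∈ G := fun i => (σ ⟨min i (M-1), by omega⟩).2
  have hstrict : ∀ i, i < M-1 → e i < e (i+1) := by
    intro i hi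
    have : (⟨min i (M-1), by omega⟩ : Fin M) < ⟨min (i+1) (M-1), by omega⟩ := by
      simp only [Fin.mk_lt_mk]
      omega
    exact_mod_cast σ.lt_iff_lt.2 this
  have hlow : e 0 = 0 := by
    have h1 : 0 ≤ e 0 := (hbd _ (hmem 0)).1
    have h2 : e 0 ≤ 0 := by
      have : (⟨min 0 (M-1), by omega⟩ : Fin M) ≤ σ.symm ⟨0, h0⟩ := by
        rw [Fin.le_def]
        simp only [Fin.val_mk]
        omega
      have := σ.le_iff_le.2 this
      rw [OrderIso.apply_symm_apply] at this
      exact_mod_cast this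
    linarith
  have hhigh : e (M-1) = c := by
    have h1 : e (M-1) ≤ c := (hbd _ (hmem (M-1))).2
    have h2 : c ≤ e (M-1) := by
      have : σ.symm ⟨c, hc⟩ ≤ (⟨min (M-1) (M-1), by omega⟩ : Fin M) := by
        rw [Fin.le_def]
        simp only [Fin.val_mk]
        have := (σ.symm ⟨c, hc⟩).isLt
        omega
      have := σ.le_iff_le.2 this
      rw [OrderIso.apply_symm_apply] at this
      exact_mod_cast this
    linarith
  refine ⟨M, e, by omega, hlow, hhigh, hstrict, hmem, ?_⟩
  intro v hv i hi
  by_contra hcon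
  push_neg at hcon
  obtain ⟨hv1, hv2⟩ := hcon
  set j := σ.symm ⟨v, hv⟩ with hj
  have hvj : (σ j : ℝ) = v := by rw [hj, OrderIso.apply_symm_apply]
  have hlt1 : (⟨min i (M-1), by omega⟩ : Fin M) < j := by
    have : e i < (σ j : ℝ) := by rw [hvj]; linarith
    exact σ.lt_iff_lt.1 (by exact_mod_cast this)
  have hlt2 : j < (⟨min (i+1) (M-1), by omega⟩ : Fin M) := by
    have : (σ j : ℝ) < e (i+1) := by rw [hvj]; linarith
    exact σ.lt_iff_lt.1 (by exact_mod_cast this)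
  rw [Fin.lt_def] at hlt1 hlt2
  simp only [Fin.val_mk] at hlt1 hlt2
  omega

open MeasureTheory in
lemma volume_prod_eq (s t : Set ℝ) : volume (s ×ˢ t) = volume s * volume t := by
  rw [← Measure.prod_prod]; rfl

open MeasureTheory in
lemma RectTiling.measure_key {z : ℝ} (T : RectTiling z) (A : Set (ℝ×ℝ))
    (hA : MeasurableSet A) :
    volume (A ∩ (Set.Icc (0:ℝ) 1 ×ˢ Set.Icc (0:ℝ) z)) =
      ∑ k, volume (A ∩ (Set.Icc (T.px k) (T.px k + T.w k) ×ˢ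
        Set.Icc (T.py k) (T.py k + T.h k))) := by
  classical
  set tile : Fin T.m → Set (ℝ×ℝ) := fun k =>
    Set.Icc (T.px k) (T.px k + T.w k) ×ˢ Set.Icc (T.py k) (T.py k + T.h k) with htile
  set op : Fin T.m → Set (ℝ×ℝ) := fun k =>
    Set.Ioo (T.px k) (T.px k + T.w k) ×ˢ Set.Ioo (T.py k) (T.py k + T.h k) with hop
  have hsub : ∀ k, op k ⊆ tile k :=
    fun k => Set.prod_mono Set.Ioo_subset_Icc_self Set.Ioo_subset_Icc_self
  have hmop : ∀ k, MeasurableSet (op k) :=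
    fun k => measurableSet_Ioo.prod measurableSet_Ioo
  have hvol_oc : ∀ k, volume (tile k) = volume (op k) := by
    intro k
    rw [htile, hop]
    simp only
    rw [volume_prod_eq, volume_prod_eq, Real.volume_Icc, Real.volume_Icc,
      Real.volume_Ioo, Real.volume_Ioo]
  have hfin : ∀ k, volume (op k) ≠ ⊤ := by
    intro k
    rw [hop]
    simp only
    rw [volume_prod_eq, Real.volume_Ioo, Real.volume_Ioo]
    exact ENNReal.mul_ne_top ENNReal.ofReal_ne_top ENNReal.ofReal_ne_top
  have hnull : ∀ k, volume (tile k \ op k) = 0 := by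
    intro k
    rw [measure_diff (hsub k) (hmop k).nullMeasurableSet (hfin k), hvol_oc k, tsub_self]
  have hAoc : ∀ k, volume (A ∩ op k) = volume (A ∩ tile k) := by
    intro k
    refine le_antisymm (measure_mono (Set.inter_subset_inter_right _ (hsub k))) ?_
    calc volume (A ∩ tile k) ≤ volume ((A ∩ op k) ∪ (tile k \ op k)) := by
          refine measure_mono ?_
          rintro x ⟨hxA, hxt⟩
          by_cases hxo : x ∈ op k
          · exact Or.inl ⟨hxA, hxo⟩
          · exact Or.inr ⟨hxt, hxo⟩
      _ ≤ volume (A ∩ op k) + volume (tile k \ op k) := measure_union_le _ _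
      _ = volume (A ∩ op k) := by rw [hnull k, add_zero]
  have htilesub : ∀ k, tile k ⊆ Set.Icc (0:ℝ) 1 ×ˢ Set.Icc (0:ℝ) z := by
    intro k
    rw [T.cover]
    exact Set.subset_iUnion (fun k => Set.Icc (T.px k) (T.px k + T.w k) ×ˢ
      Set.Icc (T.py k) (T.py k + T.h k)) k
  have hup : volume (A ∩ (Set.Icc (0:ℝ) 1 ×ˢ Set.Icc (0:ℝ) z)) ≤
      ∑ k, volume (A ∩ tile k) := by
    rw [T.cover, Set.inter_iUnion]
    exact (measure_iUnion_le _).trans (by rw [tsum_fintype])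
  have hdisj : Pairwise (Function.onFun Disjoint (fun k => A ∩ op k)) := by
    intro k l hkl
    exact (T.disj k l hkl).mono Set.inter_subset_right Set.inter_subset_right
  have hlo : ∑ k, volume (A ∩ tile k) ≤
      volume (A ∩ (Set.Icc (0:ℝ) 1 ×ˢ Set.Icc (0:ℝ) z)) := by
    have h1 : ∑ k, volume (A ∩ tile k) = ∑ k, volume (A ∩ op k) := by
      exact Finset.sum_congr rfl (fun k _ => (hAoc k).symm)
    rw [h1]
    have h2 : volume (⋃ k, A ∩ op k) = ∑' k, volume (A ∩ op k) :=
      measure_iUnion hdisj (fun k => hA.inter (hmop k))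
    rw [← tsum_fintype (L := SummationFilter.unconditional _), ← h2]
    refine measure_mono ?_
    refine Set.iUnion_subset (fun k => ?_)
    exact Set.inter_subset_inter_right _ ((hsub k).trans (htilesub k))
  exact le_antisymm hup hlo

set_option synthInstance.maxHeartbeats 1000000 in
open MeasureTheory in
lemma forward (K : Subfield ℝ) {z : ℝ} (hz : 0 < z) {n : ℕ} (X : Fin n → ℝ)
    (hXK : ∀ i, X i ∈ K) (hXpos : ∀ i, 0 < X i) (ht : Tileable z X) : z ∈ K := by
  classical
  by_contra hzK
  obtain ⟨φ, hφ1, hφz⟩ := exists_phi K z hzK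
  obtain ⟨T, hT⟩ := ht
  have hb := T.bounds
  -- the linear functional as a real-valued map
  set Φ : ℝ → ℝ := fun t => ((φ t : K) : ℝ) with hΦ
  have Φ1 : Φ 1 = 1 := by rw [hΦ]; simp only; rw [hφ1]; norm_num
  have Φz : Φ z = -1 := by rw [hΦ]; simp only; rw [hφz]; push_cast; ring
  have Φsub : ∀ u v, Φ (u - v) = Φ u - Φ v := by
    intro u v; rw [hΦ]; simp only; rw [map_sub]; push_cast; ring
  have Φ0 : Φ 0 = 0 := by rw [hΦ]; simp only; rw [map_zero]; norm_num
  have Φsum : ∀ (s : Finset ℕ) (f : ℕ → ℝ), Φ (∑ x ∈ s, f x) = ∑ x ∈ s, Φ (f x) := by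
    intro s f; rw [hΦ]; simp only; rw [map_sum]; push_cast; rfl
  have Φsmul : ∀ (x : ℝ), x ∈ K → ∀ u : ℝ, Φ (x * u) = x * Φ u := by
    intro x hx u
    have h1 : x * u = (⟨x, hx⟩ : K) • u := rfl
    rw [hΦ]; simp only
    rw [h1, LinearMap.map_smul]
    rfl
  -- the grids
  set xs : Finset ℝ := insert 0 (insert 1
    (Finset.image T.px Finset.univ ∪ Finset.image (fun k => T.px k + T.w k) Finset.univ))
    with hxs
  set ys : Finset ℝ := insert 0 (insert z
    (Finset.image T.py Finset.univ ∪ Finset.image (fun k => T.py k + T.h k) Finset.univ))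
    with hys
  have hxs0 : (0:ℝ) ∈ xs := Finset.mem_insert_self _ _
  have hxs1 : (1:ℝ) ∈ xs := Finset.mem_insert_of_mem (Finset.mem_insert_self _ _)
  have hxspx : ∀ k, T.px k ∈ xs := fun k => Finset.mem_insert_of_mem
    (Finset.mem_insert_of_mem (Finset.mem_union_left _
      (Finset.mem_image_of_mem _ (Finset.mem_univ k))))
  have hxspw : ∀ k, T.px k + T.w k ∈ xs := fun k => Finset.mem_insert_of_mem
    (Finset.mem_insert_of_mem (Finset.mem_union_right _
      (Finset.mem_image_of_mem _ (Finset.mem_univ k))))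
  have hys0 : (0:ℝ) ∈ ys := Finset.mem_insert_self _ _
  have hysz : z ∈ ys := Finset.mem_insert_of_mem (Finset.mem_insert_self _ _)
  have hyspy : ∀ k, T.py k ∈ ys := fun k => Finset.mem_insert_of_mem
    (Finset.mem_insert_of_mem (Finset.mem_union_left _
      (Finset.mem_image_of_mem _ (Finset.mem_univ k))))
  have hysph : ∀ k, T.py k + T.h k ∈ ys := fun k => Finset.mem_insert_of_mem
    (Finset.mem_insert_of_mem (Finset.mem_union_right _
      (Finset.mem_image_of_mem _ (Finset.mem_univ k))))
  have hxsbd : ∀ v ∈ xs, 0 ≤ v ∧ v ≤ 1 := by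
    intro v hv
    rw [hxs] at hv
    simp only [Finset.mem_insert, Finset.mem_union, Finset.mem_image,
      Finset.mem_univ, true_and] at hv
    rcases hv with rfl | rfl | ⟨k, rfl⟩ | ⟨k, rfl⟩
    · norm_num
    · norm_num
    · exact ⟨(hb k).1, by linarith [(hb k).2.1, T.w_pos k]⟩
    · exact ⟨by linarith [(hb k).1, T.w_pos k], (hb k).2.1⟩
  have hysbd : ∀ v ∈ ys, 0 ≤ v ∧ v ≤ z := by
    intro v hv
    rw [hys] at hv
    simp only [Finset.mem_insert, Finset.mem_union, Finset.mem_image,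
      Finset.mem_univ, true_and] at hv
    rcases hv with rfl | hvz | ⟨k, rfl⟩ | ⟨k, rfl⟩
    · exact ⟨le_refl 0, hz.le⟩
    · rw [hvz]; exact ⟨hz.le, le_refl z⟩
    · exact ⟨(hb k).2.2.1, by linarith [(hb k).2.2.2, T.h_pos k]⟩
    · exact ⟨by linarith [(hb k).2.2.1, T.h_pos k], (hb k).2.2.2⟩
  obtain ⟨Mx, ex, hMx1, hex0, hexlast, hexstrict, hexmem, hexgap⟩ :=
    grid_exists xs 1 hxs0 hxs1 hxsbd
  obtain ⟨My, ey, hMy1, hey0, heylast, heystrict, heymem, heygap⟩ :=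
    grid_exists ys z hys0 hysz hysbd
  -- tile indicator predicates
  set cx : Fin T.m → ℕ → Prop := fun k i =>
    T.px k ≤ ex i ∧ ex (i+1) ≤ T.px k + T.w k with hcx
  set cy : Fin T.m → ℕ → Prop := fun k j =>
    T.py k ≤ ey j ∧ ey (j+1) ≤ T.py k + T.h k with hcy
  -- step lemma, x direction
  have hstepx : ∀ k, ∀ i, i < Mx - 1 →
      (min (ex (i+1)) (T.px k + T.w k) - min (ex (i+1)) (T.px k)) -
      (min (ex i) (T.px k + T.w k) - min (ex i) (T.px k)) =
      if cx k i then ex (i+1) - ex i else 0 := by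
    intro k i hi
    have h1 := hexgap (T.px k) (hxspx k) i hi
    have h2 := hexgap (T.px k + T.w k) (hxspw k) i hi
    have hlt := hexstrict i hi
    have hw := T.w_pos k
    rcases h1 with h1 | h1 <;> rcases h2 with h2 | h2
    · rw [if_neg (by rw [hcx]; rintro ⟨c1, c2⟩; linarith)]
      rw [min_eq_right (by linarith : T.px k + T.w k ≤ ex (i+1)),
        min_eq_right (by linarith : T.px k ≤ ex (i+1)),
        min_eq_right h2, min_eq_right h1]
      ring
    · rw [if_pos (by rw [hcx]; exact ⟨h1, h2⟩)]
      rw [min_eq_left h2, min_eq_right (by linarith : T.px k ≤ ex (i+1)),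
        min_eq_left (by linarith : ex i ≤ T.px k + T.w k), min_eq_right h1]
      ring
    · exfalso; linarith
    · rw [if_neg (by rw [hcx]; rintro ⟨c1, c2⟩; linarith)]
      rw [min_eq_left h2, min_eq_left (by linarith : ex (i+1) ≤ T.px k),
        min_eq_left (by linarith : ex i ≤ T.px k + T.w k),
        min_eq_left (by linarith : ex i ≤ T.px k)]
      ring
  have hstepy : ∀ k, ∀ j, j < My - 1 →
      (min (ey (j+1)) (T.py k + T.h k) - min (ey (j+1)) (T.py k)) -
      (min (ey j) (T.py k + T.h k) - min (ey j) (T.py k)) =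
      if cy k j then ey (j+1) - ey j else 0 := by
    intro k j hj
    have h1 := heygap (T.py k) (hyspy k) j hj
    have h2 := heygap (T.py k + T.h k) (hysph k) j hj
    have hlt := heystrict j hj
    have hw := T.h_pos k
    rcases h1 with h1 | h1 <;> rcases h2 with h2 | h2
    · rw [if_neg (by rw [hcy]; rintro ⟨c1, c2⟩; linarith)]
      rw [min_eq_right (by linarith : T.py k + T.h k ≤ ey (j+1)),
        min_eq_right (by linarith : T.py k ≤ ey (j+1)),
        min_eq_right h2, min_eq_right h1]
      ring
    · rw [if_pos (by rw [hcy]; exact ⟨h1, h2⟩)]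
      rw [min_eq_left h2, min_eq_right (by linarith : T.py k ≤ ey (j+1)),
        min_eq_left (by linarith : ey j ≤ T.py k + T.h k), min_eq_right h1]
      ring
    · exfalso; linarith
    · rw [if_neg (by rw [hcy]; rintro ⟨c1, c2⟩; linarith)]
      rw [min_eq_left h2, min_eq_left (by linarith : ey (j+1) ≤ T.py k),
        min_eq_left (by linarith : ey j ≤ T.py k + T.h k),
        min_eq_left (by linarith : ey j ≤ T.py k)]
      ring
  -- telescoping: widths and heights as sums
  have hwsum : ∀ k, T.w k = ∑ i ∈ Finset.range (Mx-1),
      (if cx k i then ex (i+1) - ex i else 0) := by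
    intro k
    have hcongr : ∑ i ∈ Finset.range (Mx-1), (if cx k i then ex (i+1) - ex i else 0)
        = ∑ i ∈ Finset.range (Mx-1),
          ((min (ex (i+1)) (T.px k + T.w k) - min (ex (i+1)) (T.px k)) -
           (min (ex i) (T.px k + T.w k) - min (ex i) (T.px k))) :=
      Finset.sum_congr rfl (fun i hi => (hstepx k i (Finset.mem_range.mp hi)).symm)
    rw [hcongr, Finset.sum_range_sub
      (fun i => min (ex i) (T.px k + T.w k) - min (ex i) (T.px k)) (Mx-1)]
    rw [hex0, hexlast]
    rw [min_eq_right (by linarith [(hb k).2.1] : T.px k + T.w k ≤ 1),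
      min_eq_right (by linarith [(hb k).2.1, T.w_pos k] : T.px k ≤ 1),
      min_eq_left (by linarith [(hb k).1, T.w_pos k] : (0:ℝ) ≤ T.px k + T.w k),
      min_eq_left (by linarith [(hb k).1] : (0:ℝ) ≤ T.px k)]
    ring
  have hhsum : ∀ k, T.h k = ∑ j ∈ Finset.range (My-1),
      (if cy k j then ey (j+1) - ey j else 0) := by
    intro k
    have hcongr : ∑ j ∈ Finset.range (My-1), (if cy k j then ey (j+1) - ey j else 0)
        = ∑ j ∈ Finset.range (My-1),
          ((min (ey (j+1)) (T.py k + T.h k) - min (ey (j+1)) (T.py k)) -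
           (min (ey j) (T.py k + T.h k) - min (ey j) (T.py k))) :=
      Finset.sum_congr rfl (fun j hj => (hstepy k j (Finset.mem_range.mp hj)).symm)
    rw [hcongr, Finset.sum_range_sub
      (fun j => min (ey j) (T.py k + T.h k) - min (ey j) (T.py k)) (My-1)]
    rw [hey0, heylast]
    rw [min_eq_right (by linarith [(hb k).2.2.2] : T.py k + T.h k ≤ z),
      min_eq_right (by linarith [(hb k).2.2.2, T.h_pos k] : T.py k ≤ z),
      min_eq_left (by linarith [(hb k).2.2.1, T.h_pos k] : (0:ℝ) ≤ T.py k + T.h k),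
      min_eq_left (by linarith [(hb k).2.2.1] : (0:ℝ) ≤ T.py k)]
    ring
  -- apply Φ
  have hΦw : ∀ k, Φ (T.w k) = ∑ i ∈ Finset.range (Mx-1),
      (if cx k i then Φ (ex (i+1)) - Φ (ex i) else 0) := by
    intro k
    conv_lhs => rw [hwsum k]
    rw [Φsum]
    refine Finset.sum_congr rfl (fun i _ => ?_)
    split
    · exact Φsub _ _
    · exact Φ0
  have hΦh : ∀ k, Φ (T.h k) = ∑ j ∈ Finset.range (My-1),
      (if cy k j then Φ (ey (j+1)) - Φ (ey j) else 0) := by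
    intro k
    conv_lhs => rw [hhsum k]
    rw [Φsum]
    refine Finset.sum_congr rfl (fun j _ => ?_)
    split
    · exact Φsub _ _
    · exact Φ0
  -- counting lemma: each cell is covered exactly once
  have hcount : ∀ i, i < Mx - 1 → ∀ j, j < My - 1 →
      ∑ k, (if cx k i ∧ cy k j then (1:ℝ) else 0) = 1 := by
    intro i hi j hj
    have hkey := T.measure_key (Set.Icc (ex i) (ex (i+1)) ×ˢ Set.Icc (ey j) (ey (j+1)))
      ((measurableSet_Icc).prod measurableSet_Icc)
    have hxlt := hexstrict i hi
    have hylt := heystrict j hj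
    have hxi := hxsbd _ (hexmem i)
    have hxi1 := hxsbd _ (hexmem (i+1))
    have hyj := hysbd _ (heymem j)
    have hyj1 := hysbd _ (heymem (j+1))
    -- LHS of hkey
    have hLHS : (Set.Icc (ex i) (ex (i+1)) ×ˢ Set.Icc (ey j) (ey (j+1))) ∩
        (Set.Icc (0:ℝ) 1 ×ˢ Set.Icc (0:ℝ) z) =
        Set.Icc (ex i) (ex (i+1)) ×ˢ Set.Icc (ey j) (ey (j+1)) := by
      refine Set.inter_eq_self_of_subset_left (Set.prod_mono ?_ ?_)
      · exact Set.Icc_subset_Icc hxi.1 hxi1.2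
      · exact Set.Icc_subset_Icc hyj.1 hyj1.2
    set D : ENNReal := ENNReal.ofReal (ex (i+1) - ex i) * ENNReal.ofReal (ey (j+1) - ey j)
      with hD
    have hterm : ∀ k, (Set.Icc (ex i) (ex (i+1)) ×ˢ Set.Icc (ey j) (ey (j+1))) ∩
        (Set.Icc (T.px k) (T.px k + T.w k) ×ˢ Set.Icc (T.py k) (T.py k + T.h k)) =
        (Set.Icc (ex i) (ex (i+1)) ∩ Set.Icc (T.px k) (T.px k + T.w k)) ×ˢ
        (Set.Icc (ey j) (ey (j+1)) ∩ Set.Icc (T.py k) (T.py k + T.h k)) :=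
      fun k => Set.prod_inter_prod
    have hvol : ∀ k, MeasureTheory.volume
        ((Set.Icc (ex i) (ex (i+1)) ×ˢ Set.Icc (ey j) (ey (j+1))) ∩
        (Set.Icc (T.px k) (T.px k + T.w k) ×ˢ Set.Icc (T.py k) (T.py k + T.h k))) =
        if cx k i ∧ cy k j then D else 0 := by
      intro k
      rw [hterm k, volume_prod_eq, Set.Icc_inter_Icc, Set.Icc_inter_Icc,
        Real.volume_Icc, Real.volume_Icc]
      have hgx1 := hexgap (T.px k) (hxspx k) i hi
      have hgx2 := hexgap (T.px k + T.w k) (hxspw k) i hi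
      have hgy1 := heygap (T.py k) (hyspy k) j hj
      have hgy2 := heygap (T.py k + T.h k) (hysph k) j hj
      have hw := T.w_pos k
      have hh := T.h_pos k
      by_cases hcxk : cx k i
      · obtain ⟨d1, d2⟩ := hcxk
        by_cases hcyk : cy k j
        · obtain ⟨d3, d4⟩ := hcyk
          rw [if_pos ⟨⟨d1, d2⟩, d3, d4⟩, hD]
          rw [min_eq_left d2, max_eq_left d1, min_eq_left d4, max_eq_left d3]
        · rw [if_neg (by rintro ⟨_, hc⟩; exact hcyk hc)]
          -- y factor is zero
          have hyzero : ENNReal.ofReal (min (ey (j+1)) (T.py k + T.h k) -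
              max (ey j) (T.py k)) = 0 := by
            rw [ENNReal.ofReal_eq_zero]
            rcases hgy1 with g1 | g1
            · -- T.py k ≤ ey j ; then since ¬cy, T.py k + T.h k ≤ ey j
              rcases hgy2 with g2 | g2
              · have : min (ey (j+1)) (T.py k + T.h k) ≤ T.py k + T.h k := min_le_right _ _
                have : max (ey j) (T.py k) = ey j := max_eq_left g1
                calc min (ey (j+1)) (T.py k + T.h k) - max (ey j) (T.py k)
                    ≤ (T.py k + T.h k) - ey j := by
                      rw [this]
                      linarith [min_le_right (ey (j+1)) (T.py k + T.h k)]
                  _ ≤ 0 := by linarith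
              · exact absurd ⟨g1, g2⟩ hcyk
            · -- ey (j+1) ≤ T.py k
              calc min (ey (j+1)) (T.py k + T.h k) - max (ey j) (T.py k)
                  ≤ ey (j+1) - T.py k := by
                    linarith [min_le_left (ey (j+1)) (T.py k + T.h k),
                      le_max_right (ey j) (T.py k)]
                _ ≤ 0 := by linarith
          rw [hyzero, mul_zero]
      · rw [if_neg (by rintro ⟨hc, _⟩; exact hcxk hc)]
        have hxzero : ENNReal.ofReal (min (ex (i+1)) (T.px k + T.w k) -
            max (ex i) (T.px k)) = 0 := by
          rw [ENNReal.ofReal_eq_zero]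
          rcases hgx1 with g1 | g1
          · rcases hgx2 with g2 | g2
            · calc min (ex (i+1)) (T.px k + T.w k) - max (ex i) (T.px k)
                  ≤ (T.px k + T.w k) - ex i := by
                    linarith [min_le_right (ex (i+1)) (T.px k + T.w k),
                      le_max_left (ex i) (T.px k)]
                _ ≤ 0 := by linarith
            · exact absurd ⟨g1, g2⟩ hcxk
          · calc min (ex (i+1)) (T.px k + T.w k) - max (ex i) (T.px k)
                ≤ ex (i+1) - T.px k := by
                  linarith [min_le_left (ex (i+1)) (T.px k + T.w k),
                    le_max_right (ex i) (T.px k)]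
              _ ≤ 0 := by linarith
        rw [hxzero, zero_mul]
    rw [hLHS] at hkey
    rw [Finset.sum_congr rfl (fun k _ => hvol k)] at hkey
    rw [volume_prod_eq, Real.volume_Icc, Real.volume_Icc] at hkey
    -- hkey : D = ∑ k, if cx k i ∧ cy k j then D else 0
    have hsumD : ∑ k, (if cx k i ∧ cy k j then D else 0) =
        (Finset.univ.filter (fun k => cx k i ∧ cy k j)).card • D := by
      rw [← Finset.sum_filter, Finset.sum_const]
    rw [hsumD] at hkey
    have hD0 : D ≠ 0 := by
      rw [hD]
      refine mul_ne_zero ?_ ?_ <;>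
        · rw [Ne, ENNReal.ofReal_eq_zero, not_le]
          linarith [hexstrict i hi, heystrict j hj]
    have hDtop : D ≠ ⊤ := ENNReal.mul_ne_top ENNReal.ofReal_ne_top ENNReal.ofReal_ne_top
    set c := (Finset.univ.filter (fun k => cx k i ∧ cy k j)).card with hc
    have hc1 : c = 1 := by
      have h1 : D * (c : ENNReal) = D * 1 := by
        rw [mul_one, mul_comm]
        rw [nsmul_eq_mul] at hkey
        exact hkey.symm
      have h2 : (c : ENNReal) = 1 := (ENNReal.mul_right_inj hD0 hDtop).mp h1
      exact_mod_cast h2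
    rw [← Finset.sum_filter, Finset.sum_const, ← hc, hc1]
    norm_num
  -- the grand computation
  have hmain : ∑ k, Φ (T.w k) * Φ (T.h k) = -1 := by
    have step1 : ∑ k, Φ (T.w k) * Φ (T.h k) =
        ∑ k, ∑ i ∈ Finset.range (Mx-1), ∑ j ∈ Finset.range (My-1),
          ((if cx k i then Φ (ex (i+1)) - Φ (ex i) else 0) *
           (if cy k j then Φ (ey (j+1)) - Φ (ey j) else 0)) := by
      refine Finset.sum_congr rfl (fun k _ => ?_)
      rw [hΦw k, hΦh k, Finset.sum_mul_sum]
    rw [step1]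
    rw [Finset.sum_comm]
    have step2 : ∀ i ∈ Finset.range (Mx-1),
        (∑ k : Fin T.m, ∑ j ∈ Finset.range (My-1),
          ((if cx k i then Φ (ex (i+1)) - Φ (ex i) else 0) *
           (if cy k j then Φ (ey (j+1)) - Φ (ey j) else 0))) =
        (Φ (ex (i+1)) - Φ (ex i)) * ∑ j ∈ Finset.range (My-1),
          (Φ (ey (j+1)) - Φ (ey j)) := by
      intro i hi
      rw [Finset.sum_comm]
      rw [Finset.mul_sum]
      refine Finset.sum_congr rfl (fun j hj => ?_)
      have hcnt := hcount i (Finset.mem_range.mp hi) j (Finset.mem_range.mp hj)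
      have hterm : ∀ k : Fin T.m,
          ((if cx k i then Φ (ex (i+1)) - Φ (ex i) else 0) *
           (if cy k j then Φ (ey (j+1)) - Φ (ey j) else 0)) =
          ((Φ (ex (i+1)) - Φ (ex i)) * (Φ (ey (j+1)) - Φ (ey j))) *
            (if cx k i ∧ cy k j then (1:ℝ) else 0) := by
        intro k
        by_cases h1 : cx k i <;> by_cases h2 : cy k j
        · rw [if_pos h1, if_pos h2, if_pos ⟨h1, h2⟩, mul_one]
        · rw [if_pos h1, if_neg h2, if_neg (by rintro ⟨_, hc⟩; exact h2 hc), mul_zero, mul_zero]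
        · rw [if_neg h1, if_pos h2, if_neg (by rintro ⟨hc, _⟩; exact h1 hc), zero_mul, mul_zero]
        · rw [if_neg h1, if_neg h2, if_neg (by rintro ⟨hc, _⟩; exact h1 hc), zero_mul, mul_zero]
      rw [Finset.sum_congr rfl (fun k _ => hterm k), ← Finset.mul_sum, hcnt, mul_one]
    rw [Finset.sum_congr rfl step2, ← Finset.sum_mul,
      Finset.sum_range_sub (fun i => Φ (ex i)) (Mx-1),
      Finset.sum_range_sub (fun j => Φ (ey j)) (My-1),
      hex0, hexlast, hey0, heylast, Φ0, Φ1, Φz]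
    ring
  -- but each term is nonnegative
  have hnonneg : ∀ k, 0 ≤ Φ (T.w k) * Φ (T.h k) := by
    intro k
    obtain ⟨i0, hi0⟩ := hT k
    have hwne : T.w k ≠ 0 := ne_of_gt (T.w_pos k)
    have hhne : T.h k ≠ 0 := ne_of_gt (T.h_pos k)
    rcases hi0 with hcase | hcase
    · have : T.h k = X i0 * T.w k := by
        rw [← hcase]; field_simp
      rw [this, Φsmul (X i0) (hXK i0)]
      nlinarith [hXpos i0, sq_nonneg (Φ (T.w k))]
    · have : T.w k = X i0 * T.h k := by
        rw [← hcase]; field_simp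
      rw [this, Φsmul (X i0) (hXK i0)]
      nlinarith [hXpos i0, sq_nonneg (Φ (T.h k))]
  have := Finset.sum_nonneg (fun k (_ : k ∈ Finset.univ) => hnonneg k)
  rw [hmain] at this
  linarith

theorem sharov_mixed_case (p : ℚ) (hp : 0 < p) (hirr : Irrational (Real.sqrt p))
    (n : ℕ) (a b : Fin n → ℚ) (X : Fin n → ℝ)
    (hX : ∀ i, X i = (a i : ℝ) + (b i : ℝ) * Real.sqrt p)
    (hXpos : ∀ i, 0 < X i)
    (hmix : ∃ i j, ((a i : ℝ) - (b i : ℝ) * Real.sqrt p) *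
        ((a j : ℝ) - (b j : ℝ) * Real.sqrt p) < 0)
    (z : ℝ) (hz : 0 < z) :
    Tileable z X ↔ ∃ e f : ℚ, z = (e : ℝ) + (f : ℝ) * Real.sqrt p := by
  
  constructor
  · intro ht
    exact (mem_Qp hp hirr z).mp
      (forward (Qp p hp hirr) hz X (fun i => ⟨a i, b i, hX i⟩) hXpos ht)
  · rintro ⟨e, f, rfl⟩
    obtain ⟨i, j, hij⟩ := hmix
    rcases mul_neg_iff.mp hij with ⟨h1, h2⟩ | ⟨h1, h2⟩
    · exact backward hp hirr a b hX hXpos j h2 i h1 e f hz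
    · exact backward hp hirr a b hX hXpos i h1 j h2 e f hz
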